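/- If A is an n×n alternating sign matrix whose associated signed bipartite graph is a tree (i.e., A has exactly 2n−1 nonzero entries and is connected), then n is odd. -/

import Mathlib

/-- An alternating sign matrix: entries in {0,1,-1}, all row and column sums
equal 1, and all partial row and column sums (from the start) are 0 or 1. -/
def IsASM {n : ℕ} (A : Matrix (Fin n) (Fin n) ℤ) : Prop :=
  (∀ i j, A i j = 0 ∨ A i j = 1 ∨ A i j = -1) ∧
  (∀ i, ∑ j, A i j = 1) ∧
  (∀ j, ∑ i, A i j = 1) ∧
  (∀ i k, (∑ j ∈ Finset.Iic k, A i j) = 0 ∨ (∑ j ∈ Finset.Iic k, A i j) = 1) ∧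
  (∀ j k, (∑ i ∈ Finset.Iic k, A i j) = 0 ∨ (∑ i ∈ Finset.Iic k, A i j) = 1)

/-- The bipartite graph of an ASM: vertices are the rows and the columns,
with an edge between row i and column j iff A i j ≠ 0. -/
def BG {n : ℕ} (A : Matrix (Fin n) (Fin n) ℤ) : SimpleGraph (Fin n ⊕ Fin n) where
  Adj x y := (∃ i j, x = Sum.inl i ∧ y = Sum.inr j ∧ A i j ≠ 0) ∨
    (∃ i j, x = Sum.inr j ∧ y = Sum.inl i ∧ A i j ≠ 0)
  symm := by
    constructor
    rintro x y (⟨i, j, hx, hy, h⟩ | ⟨i, j, hx, hy, h⟩)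
    · exact Or.inr ⟨i, j, hy, hx, h⟩
    · exact Or.inl ⟨i, j, hy, hx, h⟩
  loopless := by
    constructor
    rintro x (⟨i, j, hx, hy, h⟩ | ⟨i, j, hx, hy, h⟩) <;> rw [hx] at hy <;> simp at hy

theorem stmt_10 {n : ℕ} (A : Matrix (Fin n) (Fin n) ℤ) (hA : IsASM A)
    (hconn : (BG A).Connected)
    (hcount : (Finset.univ.filter (fun p : Fin n × Fin n => A p.1 p.2 ≠ 0)).card = 2 * n - 1) :
    Odd n := by
  obtain ⟨hentry, hrow, -, -, -⟩ := hA
  -- n ≥ 1 from connectivity (nonempty vertex set)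
  have hn : 0 < n := by
    obtain ⟨x⟩ := hconn.nonempty
    cases x with
    | inl i => exact i.pos
    | inr j => exact j.pos
  -- each row has an odd number of nonzero entries, in ZMod 2 form
  have key : ∀ i, ((Finset.univ.filter (fun j => A i j ≠ 0)).card : ZMod 2) = 1 := by
    intro i
    have h1 : ((∑ j, A i j : ℤ) : ZMod 2) = 1 := by rw [hrow i]; norm_num
    rw [Int.cast_sum] at h1
    rw [← h1, Finset.card_filter, Nat.cast_sum]
    apply Finset.sum_congr rfl
    intro j _
    rcases hentry i j with h | h | h <;> simp [h]
  -- total count equals the sum of row counts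
  have htot : (Finset.univ.filter (fun p : Fin n × Fin n => A p.1 p.2 ≠ 0)).card
      = ∑ i, (Finset.univ.filter (fun j => A i j ≠ 0)).card := by
    rw [Finset.card_filter, ← Finset.univ_product_univ, Finset.sum_product]
    simp [Finset.card_filter]
  -- pass to ZMod 2
  have h2 : ((2 * n - 1 : ℕ) : ZMod 2) = (n : ZMod 2) := by
    rw [← hcount, htot, Nat.cast_sum]
    rw [Finset.sum_congr rfl (fun i _ => key i)]
    simp
  have h3 : ((2 * n - 1 : ℕ) : ZMod 2) = 1 := by
    have : 2 * n - 1 = 2 * (n - 1) + 1 := by omega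
    rw [this]
    push_cast
    simp
    left; decide
  rw [h3] at h2
  rw [Nat.odd_iff]
  have := congrArg ZMod.val h2
  simpa [ZMod.val_natCast, ZMod.val_one_eq_one_mod] using this.symm
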